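/- Let a = ρ·e^{iζ} with 0 ≤ ρ < 1 and ζ ∈ ℝ, and let 0 < r < 1. Then the Möbius transformation M_a(x) = (x - a)/(conj(a)·x - 1) maps the open ball B(0, r) ⊂ ℂ onto the open ball B(C, R) with center C = ρ(r² - 1)/(ρ²r² - 1) · e^{iζ} and radius R = r(ρ² - 1)/(ρ²r² - 1). -/

import Mathlib

open Complex

/-- The Möbius transformation `M_a(x) = (x - a) / (conj a * x - 1)`. -/
noncomputable def mobius (a x : ℂ) : ℂ := (x - a) / ((starRingEnd ℂ) a * x - 1)

lemma mobius_invol (a y : ℂ) (ha : (starRingEnd ℂ) a * a ≠ 1)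
    (hy : (starRingEnd ℂ) a * y - 1 ≠ 0) : mobius a (mobius a y) = y := by
  unfold mobius
  have ha' : 1 - (starRingEnd ℂ) a * a ≠ 0 := by
    intro h; apply ha; linear_combination -h
  have h2 : (starRingEnd ℂ) a * ((y - a) / ((starRingEnd ℂ) a * y - 1)) - 1
      = (1 - (starRingEnd ℂ) a * a) / ((starRingEnd ℂ) a * y - 1) := by
    field_simp
    ring
  rw [h2]
  rw [div_sub' hy, div_div_div_cancel_right₀ hy, div_eq_iff ha']
  ring

lemma aux_ineq (ρ r p q : ℝ) (hρ0 : 0 ≤ ρ) (hρ1 : ρ < 1) (hr0 : 0 < r) (hr1 : r < 1) :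
    ((p - ρ - (ρ * (r ^ 2 - 1) / (ρ ^ 2 * r ^ 2 - 1)) * (ρ * p - 1)) ^ 2 +
        (q - (ρ * (r ^ 2 - 1) / (ρ ^ 2 * r ^ 2 - 1)) * (ρ * q)) ^ 2 <
      (r * (ρ ^ 2 - 1) / (ρ ^ 2 * r ^ 2 - 1)) ^ 2 * ((ρ * p - 1) ^ 2 + (ρ * q) ^ 2)) ↔
    p ^ 2 + q ^ 2 < r ^ 2 := by
  have hρ2 : ρ ^ 2 < 1 := by nlinarith
  have hr2 : r ^ 2 < 1 := by nlinarith
  have hd : ρ ^ 2 * r ^ 2 - 1 < 0 := by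
    nlinarith [mul_pos (sub_pos.2 hρ2) (sub_pos.2 hr2)]
  have hd' : ρ ^ 2 * r ^ 2 - 1 ≠ 0 := ne_of_lt hd
  have hK : 0 < (1 - ρ ^ 2) ^ 2 / (1 - ρ ^ 2 * r ^ 2) := by
    apply div_pos
    · have : 0 < 1 - ρ ^ 2 := by nlinarith
      positivity
    · nlinarith
  have hident :
      (p - ρ - (ρ * (r ^ 2 - 1) / (ρ ^ 2 * r ^ 2 - 1)) * (ρ * p - 1)) ^ 2 +
        (q - (ρ * (r ^ 2 - 1) / (ρ ^ 2 * r ^ 2 - 1)) * (ρ * q)) ^ 2 -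
      (r * (ρ ^ 2 - 1) / (ρ ^ 2 * r ^ 2 - 1)) ^ 2 * ((ρ * p - 1) ^ 2 + (ρ * q) ^ 2)
      = ((1 - ρ ^ 2) ^ 2 / (1 - ρ ^ 2 * r ^ 2)) * (p ^ 2 + q ^ 2 - r ^ 2) := by
    have h1 : 1 - ρ ^ 2 * r ^ 2 ≠ 0 := by intro h; apply hd'; linarith
    field_simp
    ring
  constructor <;> intro h <;> nlinarith [hident, hK]

theorem mobius_image_concentric_ball (ρ ζ r : ℝ) (hρ0 : 0 ≤ ρ) (hρ1 : ρ < 1)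
    (hr0 : 0 < r) (hr1 : r < 1) :
    mobius (ρ * Complex.exp (Complex.I * ζ)) '' Metric.ball (0 : ℂ) r =
      Metric.ball ((ρ * (r ^ 2 - 1) / (ρ ^ 2 * r ^ 2 - 1) : ℝ) * Complex.exp (Complex.I * ζ))
        (r * (ρ ^ 2 - 1) / (ρ ^ 2 * r ^ 2 - 1)) := by
  have hρ2 : ρ ^ 2 < 1 := by nlinarith
  have hr2 : r ^ 2 < 1 := by nlinarith
  have hd : ρ ^ 2 * r ^ 2 - 1 < 0 := by
    nlinarith [mul_pos (sub_pos.2 hρ2) (sub_pos.2 hr2)]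
  have hd' : ρ ^ 2 * r ^ 2 - 1 ≠ 0 := ne_of_lt hd
  set e : ℂ := Complex.exp (Complex.I * ζ) with he_def
  have he : ‖e‖ = 1 := by
    rw [he_def, Complex.norm_exp]
    simp
  have hns : Complex.normSq e = 1 := by
    have := Complex.sq_norm e
    rw [he] at this
    simpa using this.symm
  have hee : e * (starRingEnd ℂ) e = 1 := by
    rw [Complex.mul_conj, hns]; simp
  set a : ℂ := (ρ : ℂ) * e with ha_def
  have hconj : (starRingEnd ℂ) a = (ρ : ℂ) * (starRingEnd ℂ) e := by
    rw [ha_def, map_mul, Complex.conj_ofReal]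
  set c : ℝ := ρ * (r ^ 2 - 1) / (ρ ^ 2 * r ^ 2 - 1) with hc_def
  set R : ℝ := r * (ρ ^ 2 - 1) / (ρ ^ 2 * r ^ 2 - 1) with hR_def
  have hc0 : 0 ≤ c := by
    rw [hc_def]
    rw [div_nonneg_iff]
    right
    constructor
    · nlinarith
    · linarith
  have hR0 : 0 < R := by
    rw [hR_def]
    apply div_pos_of_neg_of_neg
    · exact mul_neg_of_pos_of_neg hr0 (by linarith)
    · exact hd
  set C : ℂ := (c : ℂ) * e with hC_def
  have hCR1 : c + R < 1 := by
    rw [hc_def, hR_def, ← add_div, div_lt_one_of_neg hd]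
    have hpr : ρ * r < 1 := by nlinarith
    nlinarith [mul_pos (mul_pos (sub_pos.2 hpr) (sub_pos.2 hρ1)) (sub_pos.2 hr1)]
  -- key iff
  have key : ∀ x : ℂ, (starRingEnd ℂ) a * x - 1 ≠ 0 →
      (‖mobius a x - C‖ < R ↔ ‖x‖ < r) := by
    intro x hD
    have hnum : mobius a x - C =
        (x - a - C * ((starRingEnd ℂ) a * x - 1)) / ((starRingEnd ℂ) a * x - 1) := by
      rw [mobius]
      rw [eq_div_iff hD, sub_mul, div_mul_cancel₀ _ hD]
    set u : ℂ := (starRingEnd ℂ) e * x with hu_def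
    have hnum2 : x - a - C * ((starRingEnd ℂ) a * x - 1)
        = e * (u - ρ - (c : ℂ) * ((ρ : ℂ) * u - 1)) := by
      rw [hC_def, hconj, ha_def, hu_def]
      linear_combination (-x) * hee
    have hden2 : (starRingEnd ℂ) a * x - 1 = (ρ : ℂ) * u - 1 := by
      rw [hconj, hu_def]
      ring
    have hDu : ‖(ρ : ℂ) * u - 1‖ ≠ 0 := by
      rw [← hden2]
      simpa [sub_eq_zero] using hD
    have hDu' : 0 < ‖(ρ : ℂ) * u - 1‖ := lt_of_le_of_ne (by positivity) (Ne.symm hDu)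
    have hux : ‖u‖ = ‖x‖ := by
      rw [hu_def, norm_mul, Complex.norm_conj, he, one_mul]
    rw [hnum, hnum2, hden2, norm_div, norm_mul, he, one_mul,
      div_lt_iff₀ hDu']
    have sqlt : ∀ A B : ℝ, 0 ≤ A → 0 < B → (A < B ↔ A ^ 2 < B ^ 2) := by
      intro A B hA hB
      constructor <;> intro h <;> nlinarith
    rw [sqlt _ _ (norm_nonneg _) (mul_pos hR0 hDu'), mul_pow, Complex.sq_norm,
      Complex.sq_norm]
    have hre : (u - ρ - (c : ℂ) * ((ρ : ℂ) * u - 1)).re = u.re - ρ - c * (ρ * u.re - 1) := by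
      simp [Complex.sub_re, Complex.mul_re, Complex.ofReal_re, Complex.ofReal_im]
    have him : (u - ρ - (c : ℂ) * ((ρ : ℂ) * u - 1)).im = u.im - c * (ρ * u.im) := by
      simp [Complex.sub_im, Complex.mul_im, Complex.ofReal_re, Complex.ofReal_im]
    have hre2 : ((ρ:ℂ) * u - 1).re = ρ * u.re - 1 := by simp
    have him2 : ((ρ:ℂ) * u - 1).im = ρ * u.im := by simp
    rw [Complex.normSq_apply, Complex.normSq_apply, hre, him, hre2, him2, hc_def, hR_def,
      sqlt _ _ (norm_nonneg x) hr0, ← hux, Complex.sq_norm, Complex.normSq_apply]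
    simp only [← pow_two]
    exact aux_ineq ρ r u.re u.im hρ0 hρ1 hr0 hr1
  have haa : (starRingEnd ℂ) a * a ≠ 1 := by
    intro h
    have : ‖(starRingEnd ℂ) a * a‖ = 1 := by rw [h]; simp
    rw [norm_mul, Complex.norm_conj] at this
    have ha1 : ‖a‖ = ρ := by
      rw [ha_def, norm_mul, he, Complex.norm_of_nonneg hρ0, mul_one]
    rw [ha1] at this
    nlinarith
  ext y
  simp only [Set.mem_image, Metric.mem_ball, dist_zero_right,
    Complex.dist_eq]
  constructor
  · rintro ⟨x, hx, rfl⟩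
    have hD : (starRingEnd ℂ) a * x - 1 ≠ 0 := by
      intro h
      have h1 : (starRingEnd ℂ) a * x = 1 := by linear_combination h
      have : ‖(starRingEnd ℂ) a * x‖ = 1 := by rw [h1]; simp
      rw [norm_mul, Complex.norm_conj] at this
      have ha1 : ‖a‖ = ρ := by
        rw [ha_def, norm_mul, he, Complex.norm_of_nonneg hρ0, mul_one]
      rw [ha1] at this
      nlinarith [norm_nonneg x]
    exact (key x hD).2 hx
  · intro hy
    have hy1 : ‖y‖ < 1 := by
      have hCabs : ‖C‖ = c := by
        rw [hC_def, norm_mul, he, Complex.norm_of_nonneg hc0, mul_one]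
      calc ‖y‖ ≤ ‖y - C‖ + ‖C‖ := by
            simpa using norm_add_le (y - C) C
      _ < R + c := by rw [hCabs]; linarith
      _ < 1 := by linarith
    have hyD : (starRingEnd ℂ) a * y - 1 ≠ 0 := by
      intro h
      have h1 : (starRingEnd ℂ) a * y = 1 := by linear_combination h
      have : ‖(starRingEnd ℂ) a * y‖ = 1 := by rw [h1]; simp
      rw [norm_mul, Complex.norm_conj] at this
      have ha1 : ‖a‖ = ρ := by
        rw [ha_def, norm_mul, he, Complex.norm_of_nonneg hρ0, mul_one]
      rw [ha1] at this
      nlinarith [norm_nonneg y]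
    refine ⟨mobius a y, ?_, mobius_invol a y haa hyD⟩
    have hxD : (starRingEnd ℂ) a * (mobius a y) - 1 ≠ 0 := by
      have hval : (starRingEnd ℂ) a * (mobius a y) - 1
          = (1 - (starRingEnd ℂ) a * a) / ((starRingEnd ℂ) a * y - 1) := by
        rw [mobius]
        field_simp
        ring
      rw [hval]
      apply div_ne_zero _ hyD
      intro h; apply haa; linear_combination -h
    have := (key (mobius a y) hxD).1
    rw [mobius_invol a y haa hyD] at this
    exact this hy
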